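/- Let q = 2^m with m ≥ 2 and gcd(h, m) = 1; set f(x) = x^{2^h}. Then for every b in GF(q)* the map x ↦ x^{2^h} + bx is GF(2)-linear and 2-to-1 (its kernel has exactly 2 elements), so x^{2^h} is an o-polynomial. -/

import Mathlib

/-- A function is 2-to-1 if every element of its image has exactly two preimages. -/
def TwoToOne {F : Type*} (g : F → F) : Prop :=
  ∀ y : F, (∃ x : F, g x = y) → Set.ncard {x : F | g x = y} = 2

lemma cop_aux {h m : ℕ} (hh' : Nat.gcd h m = 1) : Nat.Coprime (2 ^ m - 1) (2 ^ h - 1) := by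
  by_contra hc
  set g := Nat.gcd (2 ^ m - 1) (2 ^ h - 1) with hg
  have hg1 : g ≠ 1 := hc
  set p := g.minFac with hp
  have hpp : p.Prime := Nat.minFac_prime hg1
  haveI : Fact p.Prime := ⟨hpp⟩
  have hpm : p ∣ 2 ^ m - 1 := (Nat.minFac_dvd g).trans (Nat.gcd_dvd_left _ _)
  have hph : p ∣ 2 ^ h - 1 := (Nat.minFac_dvd g).trans (Nat.gcd_dvd_right _ _)
  have key : ∀ n : ℕ, p ∣ 2 ^ n - 1 → (2 : ZMod p) ^ n = 1 := by
    intro n hd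
    have h1 : (1 : ℕ) ≡ 2 ^ n [MOD p] := (Nat.modEq_iff_dvd' (Nat.one_le_two_pow)).2 hd
    have := (ZMod.natCast_eq_natCast_iff _ _ _).2 h1
    push_cast at this
    exact this.symm
  have hdm : orderOf (2 : ZMod p) ∣ m := orderOf_dvd_of_pow_eq_one (key m hpm)
  have hdh : orderOf (2 : ZMod p) ∣ h := orderOf_dvd_of_pow_eq_one (key h hph)
  have : orderOf (2 : ZMod p) ∣ 1 := (Nat.dvd_gcd hdh hdm).trans hh'.dvd
  have h2 : (2 : ZMod p) = 1 := orderOf_eq_one_iff.1 (Nat.dvd_one.1 this)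
  have : (1 : ZMod p) = 0 := by linear_combination h2
  have := (CharP.cast_eq_zero_iff (ZMod p) p 1).1 (by exact_mod_cast this)
  exact hpp.one_lt.ne' (Nat.dvd_one.1 this)

theorem stmt_19 {F : Type*} [Field F] [Fintype F] (m h : ℕ) (hm : 2 ≤ m)
    (hq : Fintype.card F = 2 ^ m) (hh : Nat.gcd h m = 1) :
    ∀ b : F, b ≠ 0 →
      (∀ x y : F, (x + y) ^ (2 ^ h) + b * (x + y) =
        (x ^ (2 ^ h) + b * x) + (y ^ (2 ^ h) + b * y)) ∧
      Set.ncard {x : F | x ^ (2 ^ h) + b * x = 0} = 2 ∧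
      TwoToOne (fun x : F => x ^ (2 ^ h) + b * x) := by
  -- char 2
  obtain ⟨p, hc⟩ := CharP.exists F
  haveI := hc
  have hp : p.Prime := CharP.char_is_prime F p
  haveI : Fact p.Prime := ⟨hp⟩
  obtain ⟨n, hn⟩ := FiniteField.card F p
  have hp2 : p = 2 := by
    have : p ∣ 2 ^ m := by
      rw [← hq, hn.2]; exact dvd_pow_self p n.2.ne'
    exact (Nat.prime_dvd_prime_iff_eq hp Nat.prime_two).1 (hp.dvd_of_dvd_pow this)
  subst hp2
  have hh1 : 1 ≤ h := by
    rcases Nat.eq_zero_or_pos h with h0 | h1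
    · subst h0; simp at hh; omega
    · exact h1
  have hadd : ∀ x y : F, (x + y) ^ (2 ^ h) = x ^ (2 ^ h) + y ^ (2 ^ h) := fun x y =>
    add_pow_char_pow x y 2 h
  intro b hb
  classical
  -- units coprime equiv
  have hcardU : Nat.card Fˣ = 2 ^ m - 1 := by
    rw [Nat.card_eq_fintype_card, Fintype.card_units, hq]
  have hco : (Nat.card Fˣ).Coprime (2 ^ h - 1) := by
    rw [hcardU]; exact cop_aux hh
  set e := powCoprime hco with he
  set au : Fˣ := e.symm (Units.mk0 b hb) with hau
  set a : F := (au : F) with ha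
  have ha0 : a ≠ 0 := au.ne_zero
  have hab : a ^ (2 ^ h - 1) = b := by
    have : au ^ (2 ^ h - 1) = Units.mk0 b hb := e.apply_symm_apply (Units.mk0 b hb)
    calc a ^ (2 ^ h - 1) = ((au ^ (2 ^ h - 1) : Fˣ) : F) := by push_cast [ha]; ring
      _ = b := by rw [this]; rfl
  have char2 : ∀ x : F, x + x = 0 := fun x => by
    have := CharTwo.add_self_eq_zero (R := F) x; exact this
  -- factor the polynomial
  have hfac : ∀ x : F, x ^ (2 ^ h) + b * x = x * (x ^ (2 ^ h - 1) + b) := by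
    intro x
    have : x ^ (2 ^ h) = x * x ^ (2 ^ h - 1) := by
      conv_lhs => rw [show 2 ^ h = 1 + (2 ^ h - 1) by have := Nat.one_le_two_pow (n := h); omega]
      rw [pow_add, pow_one]
    rw [this]; ring
  -- kernel = {0, a}
  have hker : {x : F | x ^ (2 ^ h) + b * x = 0} = {0, a} := by
    ext x
    simp only [Set.mem_setOf_eq, Set.mem_insert_iff, Set.mem_singleton_iff]
    rw [hfac x, mul_eq_zero]
    constructor
    · rintro (h0 | h1)
      · exact Or.inl h0
      · right
        have hx0 : x ≠ 0 := by
          rintro rfl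
          rw [zero_pow (Nat.sub_ne_zero_of_lt (Nat.one_lt_two_pow_iff.2 (by omega))), zero_add] at h1
          exact hb h1
        have hxb : x ^ (2 ^ h - 1) = b := by
          have := char2 b
          have h2 : x ^ (2 ^ h - 1) + b + b = b := by rw [h1]; ring
          rw [add_assoc, char2 b, add_zero] at h2; exact h2
        -- x as a unit
        have : (Units.mk0 x hx0) ^ (2 ^ h - 1) = Units.mk0 b hb := by
          ext; push_cast; exact hxb
        have := e.injective (a₁ := Units.mk0 x hx0) (a₂ := au) ?_
        · have := congrArg (Units.val) this; simpa using this
        · rw [hau, e.apply_symm_apply]; exact this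
    · rintro (rfl | rfl)
      · exact Or.inl rfl
      · right; rw [hab]; exact char2 b
  have hka : Set.ncard {x : F | x ^ (2 ^ h) + b * x = 0} = 2 := by
    rw [hker]; exact Set.ncard_pair (Ne.symm ha0)
  refine ⟨fun x y => by rw [hadd]; ring, hka, ?_⟩
  intro y ⟨x₀, hx₀⟩
  have hx₀' : x₀ ^ (2 ^ h) + b * x₀ = y := hx₀
  have hfib : {x : F | x ^ (2 ^ h) + b * x = y} = {x₀, x₀ + a} := by
    ext x
    simp only [Set.mem_setOf_eq, Set.mem_insert_iff, Set.mem_singleton_iff]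
    constructor
    · intro hx
      have hk : (x + x₀) ^ (2 ^ h) + b * (x + x₀) = 0 := by
        rw [hadd]
        have h3 : x ^ 2 ^ h + x₀ ^ 2 ^ h + b * (x + x₀)
            = (x ^ 2 ^ h + b * x) + (x₀ ^ 2 ^ h + b * x₀) := by ring
        rw [h3, hx, hx₀']
        exact char2 _
      have hmem : (x + x₀) ∈ {x : F | x ^ (2 ^ h) + b * x = 0} := hk
      rw [hker] at hmem
      simp only [Set.mem_insert_iff, Set.mem_singleton_iff] at hmem
      rcases hmem with h0 | h1
      · left
        have : x + x₀ + x₀ = x₀ := by rw [h0]; ring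
        rwa [add_assoc, char2 x₀, add_zero] at this
      · right
        have : x + x₀ + x₀ = a + x₀ := by rw [h1]
        rw [add_assoc, char2 x₀, add_zero] at this
        rw [this]; ring
    · rintro (rfl | rfl)
      · exact hx₀'
      · rw [hadd]
        have hk : a ^ (2 ^ h) + b * a = 0 := by
          have hma : a ∈ ({0, a} : Set F) := by simp
          rw [← hker] at hma; exact hma
        calc x₀ ^ 2 ^ h + a ^ 2 ^ h + b * (x₀ + a)
            = (x₀ ^ 2 ^ h + b * x₀) + (a ^ 2 ^ h + b * a) := by ring
          _ = y + 0 := by rw [hx₀', hk]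
          _ = y := add_zero y
  show Set.ncard {x : F | x ^ (2 ^ h) + b * x = y} = 2
  rw [hfib]
  exact Set.ncard_pair (fun hcon => ha0 (left_eq_add.1 hcon))
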